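/- Let X be a finite set with m ≥ 1 elements, let n, r, K be integers with 1 ≤ r, n·r ≤ m and K ≤ m, let S_1, …, S_T ⊆ X be sets with |S_i| ≤ K for all i, and let k_1, …, k_T ∈ {1, …, n} be indices. If T · (K/m)^r < 1, then there exist pairwise disjoint sets R_1, …, R_n ⊆ X, each of cardinality r, such that R_{k_i} is not a subset of S_i for any i ∈ {1, …, T}. -/

import Mathlib

open Finset

private lemma descFactorial_split (m a : ℕ) : ∀ b : ℕ,
    m.descFactorial (a + b) = m.descFactorial a * (m - a).descFactorial b := by
  intro b
  induction b with
  | zero => simp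
  | succ b ih =>
    rw [← Nat.add_assoc, Nat.descFactorial_succ, Nat.descFactorial_succ, ih]
    have : m - (a + b) = m - a - b := by omega
    rw [this]
    ring

private lemma desc_pow_le (K m r : ℕ) (hK : K ≤ m) :
    (K.descFactorial r : ℝ) * (m : ℝ) ^ r ≤ (K : ℝ) ^ r * (m.descFactorial r : ℝ) := by
  induction r with
  | zero => simp
  | succ r ih =>
    have hnat : (K - r) * m ≤ K * (m - r) := by
      have h1 : K * r ≤ r * m := (Nat.mul_le_mul_right r hK).trans_eq (Nat.mul_comm m r)
      calc (K - r) * m = K * m - r * m := Nat.sub_mul _ _ _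
        _ ≤ K * m - K * r := Nat.sub_le_sub_left h1 _
        _ = K * (m - r) := by
            rw [Nat.mul_comm K (m - r), Nat.sub_mul, Nat.mul_comm m K, Nat.mul_comm r K]
    have h1 : ((K - r : ℕ) : ℝ) * (m : ℝ) ≤ (K : ℝ) * ((m - r : ℕ) : ℝ) := by
      exact_mod_cast hnat
    calc (K.descFactorial (r + 1) : ℝ) * (m : ℝ) ^ (r + 1)
        = (((K - r : ℕ) : ℝ) * (m : ℝ)) * ((K.descFactorial r : ℝ) * (m : ℝ) ^ r) := by
          rw [Nat.descFactorial_succ]; push_cast; ring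
      _ ≤ ((K : ℝ) * ((m - r : ℕ) : ℝ)) * ((K : ℝ) ^ r * (m.descFactorial r : ℝ)) := by
          refine mul_le_mul h1 ih (by positivity) (by positivity)
      _ = (K : ℝ) ^ (r + 1) * (m.descFactorial (r + 1) : ℝ) := by
          rw [Nat.descFactorial_succ]; push_cast; ring

private lemma card_block_eq {n r : ℕ} (k0 : Fin n) :
    Fintype.card {p : Fin n × Fin r // p.1 = k0} = r := by
  have e : {p : Fin n × Fin r // p.1 = k0} ≃ Fin r :=
    { toFun := fun p => p.1.2
      invFun := fun t => ⟨(k0, t), rfl⟩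
      left_inv := by rintro ⟨⟨a, b⟩, h⟩; subst h; rfl
      right_inv := fun t => rfl }
  rw [Fintype.card_congr e, Fintype.card_fin]

private lemma bad_card_le {α : Type*} [Fintype α] [DecidableEq α] {n r : ℕ}
    (k0 : Fin n) (Si : Finset α) :
    (Finset.univ.filter (fun f : (Fin n × Fin r) ↪ α => ∀ t, f (k0, t) ∈ Si)).card
      ≤ Si.card.descFactorial r *
        (Fintype.card α - r).descFactorial (n * r - r) := by
  classical
  rw [← Fintype.card_subtype]
  have hJ : ∃ J : {f : (Fin n × Fin r) ↪ α // ∀ t, f (k0, t) ∈ Si} →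
      (Σ g : {g : Fin r ↪ α // ∀ t, g t ∈ Si},
        ({p : Fin n × Fin r // p.1 ≠ k0} ↪ ((Set.range (⇑g.1))ᶜ : Set α))),
      Function.Injective J := by
    refine ⟨fun f => ⟨⟨⟨fun t => f.1 (k0, t), fun t t' h => ?_⟩, fun t => f.2 t⟩,
      ⟨fun p => ⟨f.1 p.1, ?_⟩, fun p p' h => ?_⟩⟩, ?_⟩
    · have := f.1.injective h
      exact congrArg Prod.snd this
    · rintro ⟨t, ht⟩
      simp only [Function.Embedding.coeFn_mk] at ht
      have := f.1.injective ht
      exact p.2 (congrArg Prod.fst this).symm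
    · have : f.1 p.1 = f.1 p'.1 := congrArg Subtype.val h
      exact Subtype.ext (f.1.injective this)
    · intro f f' h
      apply Subtype.ext
      apply Function.Embedding.ext
      intro q
      by_cases hq : q.1 = k0
      · have h1 := congrArg (fun z => (z.1 : Fin r ↪ α) q.2) h
        simp only [Function.Embedding.coeFn_mk] at h1
        obtain ⟨a, b⟩ := q
        cases hq
        exact h1
      · have h2 := congrArg (fun z : (Σ g : {g : Fin r ↪ α // ∀ t, g t ∈ Si},
          ({p : Fin n × Fin r // p.1 ≠ k0} ↪ ((Set.range (⇑g.1))ᶜ : Set α))) =>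
            ((z.2 ⟨q, hq⟩ : ((Set.range (⇑z.1.1))ᶜ : Set α)) : α)) h
        exact h2
  obtain ⟨J, hJ⟩ := hJ
  refine (Fintype.card_le_of_injective J hJ).trans ?_
  rw [Fintype.card_sigma]
  have h1 : ∀ g : {g : Fin r ↪ α // ∀ t, g t ∈ Si},
      Fintype.card ({p : Fin n × Fin r // p.1 ≠ k0} ↪ ((Set.range (⇑g.1))ᶜ : Set α))
        = (Fintype.card α - r).descFactorial (n * r - r) := by
    intro g
    rw [Fintype.card_embedding_eq]
    congr 1
    · rw [Fintype.card_compl_set, Fintype.card_range, Fintype.card_fin]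
    · rw [Fintype.card_subtype_compl, card_block_eq]
      congr 1
      simp
  rw [Finset.sum_congr rfl (fun g _ => h1 g), Finset.sum_const, Finset.card_univ,
    smul_eq_mul]
  apply Nat.mul_le_mul_right
  have h2 : Fintype.card {g : Fin r ↪ α // ∀ t, g t ∈ Si} = Si.card.descFactorial r := by
    rw [Fintype.card_congr
      ((Equiv.subtypeEquivRight (q := fun g : Fin r ↪ α => ∀ a, g a ∈ (Si : Set α))
          (by intro g; simp)).trans
        (Equiv.codRestrict (Fin r) (Si : Set α))),
      Fintype.card_embedding_eq, Fintype.card_fin]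
    congr 1
    simp
  exact h2.le

theorem exists_unseen_disjoint_subsets {α : Type*} [Fintype α] [DecidableEq α]
    (m n r K T : ℕ) (hm : Fintype.card α = m) (hm1 : 1 ≤ m)
    (hr : 1 ≤ r) (hnrm : n * r ≤ m) (hK : K ≤ m)
    (S : Fin T → Finset α) (k : Fin T → Fin n)
    (hS : ∀ i, (S i).card ≤ K)
    (hT : (T : ℝ) * ((K : ℝ) / (m : ℝ)) ^ r < 1) :
    ∃ R : Fin n → Finset α, (∀ j, (R j).card = r) ∧
      (∀ j j', j ≠ j' → Disjoint (R j) (R j')) ∧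
      ∀ i, ¬ R (k i) ⊆ S i := by
  classical
  rcases Nat.eq_zero_or_pos n with hn | hn
  · subst hn
    exact ⟨fun j => j.elim0, fun j => j.elim0, fun j => j.elim0, fun i => (k i).elim0⟩
  have hrn : r ≤ n * r := Nat.le_mul_of_pos_left r hn
  have hrm : r ≤ m := hrn.trans hnrm
  have hm0 : (0 : ℝ) < (m : ℝ) := by exact_mod_cast hm1
  set Bad : Fin T → Finset ((Fin n × Fin r) ↪ α) :=
    fun i => Finset.univ.filter (fun f => ∀ t, f (k i, t) ∈ S i) with hBad
  have hΩ : Fintype.card ((Fin n × Fin r) ↪ α)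
      = m.descFactorial r * (m - r).descFactorial (n * r - r) := by
    rw [Fintype.card_embedding_eq, hm]
    have : Fintype.card (Fin n × Fin r) = n * r := by simp
    rw [this, ← Nat.add_sub_cancel' hrn, descFactorial_split, Nat.add_sub_cancel_left]
  have key : ∀ i, ((Bad i).card : ℝ)
      ≤ ((K : ℝ) / (m : ℝ)) ^ r * (Fintype.card ((Fin n × Fin r) ↪ α) : ℝ) := by
    intro i
    have hb : (Bad i).card ≤ K.descFactorial r * (m - r).descFactorial (n * r - r) := by
      refine (bad_card_le (k i) (S i)).trans ?_
      rw [hm]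
      exact Nat.mul_le_mul_right _ (Nat.descFactorial_le r (hS i))
    have hL : (K.descFactorial r : ℝ) ≤ ((K : ℝ) / (m : ℝ)) ^ r * (m.descFactorial r : ℝ) := by
      rw [div_pow, div_mul_eq_mul_div, le_div_iff₀ (by positivity)]
      exact desc_pow_le K m r hK
    calc ((Bad i).card : ℝ)
        ≤ (K.descFactorial r : ℝ) * ((m - r).descFactorial (n * r - r) : ℝ) := by
          exact_mod_cast hb
      _ ≤ (((K : ℝ) / (m : ℝ)) ^ r * (m.descFactorial r : ℝ))
            * ((m - r).descFactorial (n * r - r) : ℝ) := by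
          exact mul_le_mul_of_nonneg_right hL (by positivity)
      _ = ((K : ℝ) / (m : ℝ)) ^ r * (Fintype.card ((Fin n × Fin r) ↪ α) : ℝ) := by
          rw [hΩ]; push_cast; ring
  have hNe : ∃ f : (Fin n × Fin r) ↪ α, ∀ i, f ∉ Bad i := by
    by_contra h
    push_neg at h
    have hsub : (Finset.univ : Finset ((Fin n × Fin r) ↪ α)) ⊆ Finset.univ.biUnion Bad := by
      intro f _
      obtain ⟨i, hi⟩ := h f
      exact Finset.mem_biUnion.2 ⟨i, Finset.mem_univ i, hi⟩
    have hcard : Fintype.card ((Fin n × Fin r) ↪ α) ≤ ∑ i, (Bad i).card := by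
      rw [← Finset.card_univ]
      exact (Finset.card_le_card hsub).trans Finset.card_biUnion_le
    have hpos : 0 < Fintype.card ((Fin n × Fin r) ↪ α) := by
      refine Fintype.card_pos_iff.2 (Function.Embedding.nonempty_of_card_le ?_)
      simpa [hm] using hnrm
    have hposR : (0 : ℝ) < (Fintype.card ((Fin n × Fin r) ↪ α) : ℝ) := by exact_mod_cast hpos
    have hcR : (Fintype.card ((Fin n × Fin r) ↪ α) : ℝ) ≤ ∑ i, ((Bad i).card : ℝ) := by
      exact_mod_cast hcard
    have hsum : ∑ i, ((Bad i).card : ℝ)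
        ≤ (T : ℝ) * (((K : ℝ) / (m : ℝ)) ^ r * (Fintype.card ((Fin n × Fin r) ↪ α) : ℝ)) := by
      calc ∑ i, ((Bad i).card : ℝ)
          ≤ ∑ _i : Fin T, ((K : ℝ) / (m : ℝ)) ^ r * (Fintype.card ((Fin n × Fin r) ↪ α) : ℝ) :=
            Finset.sum_le_sum fun i _ => key i
        _ = (T : ℝ) * (((K : ℝ) / (m : ℝ)) ^ r * (Fintype.card ((Fin n × Fin r) ↪ α) : ℝ)) := by
            rw [Finset.sum_const, Finset.card_univ, Fintype.card_fin, nsmul_eq_mul]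
    have hlt : (T : ℝ) * (((K : ℝ) / (m : ℝ)) ^ r * (Fintype.card ((Fin n × Fin r) ↪ α) : ℝ))
        < (Fintype.card ((Fin n × Fin r) ↪ α) : ℝ) := by
      have := mul_lt_mul_of_pos_right hT hposR
      calc (T : ℝ) * (((K : ℝ) / (m : ℝ)) ^ r * (Fintype.card ((Fin n × Fin r) ↪ α) : ℝ))
          = (T : ℝ) * ((K : ℝ) / (m : ℝ)) ^ r * (Fintype.card ((Fin n × Fin r) ↪ α) : ℝ) := by
            ring
        _ < 1 * (Fintype.card ((Fin n × Fin r) ↪ α) : ℝ) := this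
        _ = _ := one_mul _
    linarith
  obtain ⟨f, hf⟩ := hNe
  have hinj : ∀ j : Fin n, Function.Injective (fun t : Fin r => f (j, t)) := by
    intro j t t' h
    exact congrArg Prod.snd (f.injective h)
  refine ⟨fun j => Finset.univ.image (fun t : Fin r => f (j, t)), ?_, ?_, ?_⟩
  · intro j
    rw [Finset.card_image_of_injective _ (hinj j), Finset.card_univ, Fintype.card_fin]
  · intro j j' hne
    rw [Finset.disjoint_left]
    rintro x hx hx'
    simp only [Finset.mem_image, Finset.mem_univ, true_and] at hx hx'
    obtain ⟨t, ht⟩ := hx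
    obtain ⟨t', ht'⟩ := hx'
    exact hne (congrArg Prod.fst (f.injective (ht.trans ht'.symm)))
  · intro i hsub
    refine hf i ?_
    rw [hBad]
    refine Finset.mem_filter.2 ⟨Finset.mem_univ _, fun t => hsub ?_⟩
    exact Finset.mem_image.2 ⟨t, Finset.mem_univ t, rfl⟩
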